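/- Let E be a finite collection of measurable sets such that the maximal operator M_E satisfies μ({M_E(1_B) > η}) ≤ M μ(B) for all measurable B (with η ∈ (0,1), M < ∞), and suppose that for every subcollection F ⊆ E one has the weak-type bound ‖h_F‖_{L^{1,∞}(μ)} ≤ C₀ μ(sh(F)). Then ‖E‖_{Carleson(μ)} ≤ 2(1−η)^{-1} M C₀. -/

import Mathlib

open MeasureTheory Set
open scoped ENNReal

noncomputable def BsetD {X : Type*} [MeasurableSpace X] {ι : Type*}
    (E : ι → Set X) (lam : ℝ≥0∞) (G : Finset ι) : Set X :=
  {x | lam < ∑ j ∈ G, (E j).indicator (1 : X → ℝ≥0∞) x}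

open Classical in
noncomputable def badF {X : Type*} [MeasurableSpace X] (μ : Measure X) {ι : Type*}
    (E : ι → Set X) (η lam : ℝ≥0∞) (G : Finset ι) : Finset ι :=
  G.filter fun i => η < μ (BsetD E lam G ∩ E i) / μ (E i)

noncomputable def GseqD {X : Type*} [MeasurableSpace X] (μ : Measure X) {ι : Type*}
    (E : ι → Set X) (η lam : ℝ≥0∞) (F : Finset ι) : ℕ → Finset ι
  | 0 => F
  | k + 1 => badF μ E η lam (GseqD μ E η lam F k)

theorem stmt6 {X : Type*} [MeasurableSpace X] (μ : Measure X)
    {ι : Type*} (s : Finset ι) (E : ι → Set X)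
    (hmeas : ∀ i ∈ s, MeasurableSet (E i))
    (hpos : ∀ i ∈ s, 0 < μ (E i)) (hfin : ∀ i ∈ s, μ (E i) < ⊤)
    (η M C₀ : ℝ≥0∞) (hη0 : 0 < η) (hη1 : η < 1) (hMfin : M < ⊤)
    (hmax : ∀ B : Set X, MeasurableSet B →
      μ {x | η < ⨆ i ∈ s, (E i).indicator (fun _ => μ (B ∩ E i) / μ (E i)) x} ≤ M * μ B)
    (hwt : ∀ F ⊆ s, ∀ lam : ℝ≥0∞, 0 < lam →
      lam * μ {x | lam < ∑ i ∈ F, (E i).indicator (1 : X → ℝ≥0∞) x} ≤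
        C₀ * μ (⋃ i ∈ F, E i)) :
    ∀ F ⊆ s, ∑ i ∈ F, μ (E i) ≤ 2 * (1 - η)⁻¹ * M * C₀ * μ (⋃ i ∈ F, E i) := by
  classical
  intro F hF
  rcases F.eq_empty_or_nonempty with hFe | ⟨i₀, hi₀⟩
  · simp [hFe]
  have hi₀s : i₀ ∈ s := hF hi₀
  have h0 : μ (E i₀) ≠ 0 := (hpos i₀ hi₀s).ne'
  have htop : μ (E i₀) ≠ ⊤ := (hfin i₀ hi₀s).ne
  -- 1 ≤ M
  have hM1 : 1 ≤ M := by
    have hsub : E i₀ ⊆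
        {x | η < ⨆ i ∈ s, (E i).indicator (fun _ => μ (E i₀ ∩ E i) / μ (E i)) x} := by
      intro x hx
      have h1 : (E i₀).indicator (fun _ => μ (E i₀ ∩ E i₀) / μ (E i₀)) x = 1 := by
        rw [Set.indicator_of_mem hx, Set.inter_self, ENNReal.div_self h0 htop]
      have hle : (E i₀).indicator (fun _ => μ (E i₀ ∩ E i₀) / μ (E i₀)) x ≤
          ⨆ i ∈ s, (E i).indicator (fun _ => μ (E i₀ ∩ E i) / μ (E i)) x :=
        le_iSup₂ (f := fun i (_ : i ∈ s) =>
          (E i).indicator (fun _ => μ (E i₀ ∩ E i) / μ (E i)) x) i₀ hi₀s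
      exact lt_of_lt_of_le hη1 (h1 ▸ hle)
    have h2 : μ (E i₀) ≤ M * μ (E i₀) :=
      (measure_mono hsub).trans (hmax (E i₀) (hmeas i₀ hi₀s))
    exact (ENNReal.mul_le_mul_iff_left h0 htop).mp (by simpa [one_mul] using h2)
  have hM0 : M ≠ 0 := fun h => by simp [h] at hM1
  -- C₀ ≠ 0
  have hC0pos : C₀ ≠ 0 := by
    have hset : {x | (2 : ℝ≥0∞)⁻¹ < ∑ i ∈ ({i₀} : Finset ι), (E i).indicator (1 : X → ℝ≥0∞) x}
        = E i₀ := by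
      ext x
      simp only [Finset.sum_singleton, Set.mem_setOf_eq]
      by_cases hx : x ∈ E i₀
      · simp only [Set.indicator_of_mem hx, Pi.one_apply, hx, iff_true]
        exact ENNReal.inv_lt_one.mpr (by norm_num)
      · simp [Set.indicator_of_notMem hx, hx]
    have h3 := hwt {i₀} (by simpa using hi₀s) 2⁻¹ (by norm_num)
    rw [hset] at h3
    simp only [Finset.mem_singleton, Set.iUnion_iUnion_eq_left] at h3
    have h4 : (2 : ℝ≥0∞)⁻¹ ≤ C₀ := (ENNReal.mul_le_mul_iff_left h0 htop).mp h3
    intro hc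
    rw [hc] at h4
    simp at h4
  by_cases hC0top : C₀ = ⊤
  · -- RHS is ⊤
    have hμsh : μ (⋃ i ∈ F, E i) ≠ 0 := by
      intro h
      exact h0 (measure_mono_null (fun y hy => Set.mem_iUnion₂.mpr ⟨i₀, hi₀, hy⟩) h)
    have hRtop : 2 * (1 - η)⁻¹ * M * C₀ * μ (⋃ i ∈ F, E i) = ⊤ := by
      have ha : (2 : ℝ≥0∞) * (1 - η)⁻¹ * M ≠ 0 := by
        refine mul_ne_zero (mul_ne_zero two_ne_zero ?_) hM0
        exact ENNReal.inv_ne_zero.mpr (lt_of_le_of_lt tsub_le_self ENNReal.one_lt_top).ne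
      rw [hC0top, ENNReal.mul_top ha, ENNReal.top_mul hμsh]
    rw [hRtop]
    exact le_top
  -- main case
  set lam : ℝ≥0∞ := 2 * M * C₀ with hlam
  have hlam0 : lam ≠ 0 := mul_ne_zero (mul_ne_zero two_ne_zero hM0) hC0pos
  have hlampos : 0 < lam := pos_iff_ne_zero.mpr hlam0
  set Gs : ℕ → Finset ι := GseqD μ E η lam F with hGs
  have hGstep : ∀ k, Gs (k + 1) = badF μ E η lam (Gs k) := fun k => rfl
  have hGmono : ∀ k, Gs (k + 1) ⊆ Gs k := by
    intro k
    rw [hGstep]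
    exact Finset.filter_subset _ _
  have hGsubF : ∀ k, Gs k ⊆ F := by
    intro k
    induction k with
    | zero => exact subset_rfl
    | succ n ih => exact (hGmono n).trans ih
  have hGsubs : ∀ k, Gs k ⊆ s := fun k => (hGsubF k).trans hF
  have hBkmeas : ∀ k, MeasurableSet (BsetD E lam (Gs k)) := by
    intro k
    exact measurableSet_lt measurable_const
      (Finset.measurable_sum _ fun i hi => measurable_one.indicator (hmeas i (hGsubs k hi)))
  -- the key strict-decrease property
  have key : ∀ G' : Finset ι, G' ⊆ s → G'.Nonempty → badF μ E η lam G' ≠ G' := by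
    rintro G' hG's ⟨j, hj⟩ heq
    have hB'meas : MeasurableSet (BsetD E lam G') :=
      measurableSet_lt measurable_const
        (Finset.measurable_sum _ fun i hi => measurable_one.indicator (hmeas i (hG's hi)))
    have hsub : (⋃ i ∈ G', E i) ⊆
        {x | η < ⨆ i ∈ s, (E i).indicator
          (fun _ => μ (BsetD E lam G' ∩ E i) / μ (E i)) x} := by
      intro x hx
      rcases Set.mem_iUnion₂.mp hx with ⟨i, hiG, hxi⟩
      have hi' : i ∈ badF μ E η lam G' := heq.symm ▸ hiG
      have hp : η < μ (BsetD E lam G' ∩ E i) / μ (E i) := by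
        simp only [badF, Finset.mem_filter] at hi'
        exact hi'.2
      have hle : (E i).indicator
            (fun _ => μ (BsetD E lam G' ∩ E i) / μ (E i)) x ≤
          ⨆ i' ∈ s, (E i').indicator
            (fun _ => μ (BsetD E lam G' ∩ E i') / μ (E i')) x :=
        le_iSup₂ (f := fun i' (_ : i' ∈ s) => (E i').indicator
          (fun _ => μ (BsetD E lam G' ∩ E i') / μ (E i')) x) i (hG's hiG)
      rw [Set.indicator_of_mem hxi] at hle
      exact lt_of_lt_of_le hp hle
    have h5 : μ (⋃ i ∈ G', E i) ≤ M * μ (BsetD E lam G') :=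
      (measure_mono hsub).trans (hmax _ hB'meas)
    have h6 : lam * μ (BsetD E lam G') ≤ C₀ * μ (⋃ i ∈ G', E i) :=
      hwt G' hG's lam hlampos
    set A := μ (⋃ i ∈ G', E i) with hA
    have hA0 : A ≠ 0 := by
      intro h
      exact (hpos j (hG's hj)).ne'
        (measure_mono_null (fun y hy => Set.mem_iUnion₂.mpr ⟨j, hj, hy⟩) h)
    have hAtop : A ≠ ⊤ := by
      refine ((measure_biUnion_finset_le G' E).trans_lt ?_).ne
      exact ENNReal.sum_lt_top.mpr fun i hi => hfin i (hG's hi)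
    have hb0 : M * (C₀ * A) ≠ 0 := mul_ne_zero hM0 (mul_ne_zero hC0pos hA0)
    have hbtop : M * (C₀ * A) ≠ ⊤ :=
      ENNReal.mul_ne_top hMfin.ne (ENNReal.mul_ne_top hC0top hAtop)
    have hchain : 2 * (M * (C₀ * A)) ≤ 1 * (M * (C₀ * A)) := by
      calc 2 * (M * (C₀ * A)) = lam * A := by rw [hlam]; ring
        _ ≤ lam * (M * μ (BsetD E lam G')) := mul_le_mul_right h5 lam
        _ = M * (lam * μ (BsetD E lam G')) := by ring
        _ ≤ M * (C₀ * A) := mul_le_mul_right h6 M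
        _ = 1 * (M * (C₀ * A)) := (one_mul _).symm
    have h7 : (2 : ℝ≥0∞) ≤ 1 := (ENNReal.mul_le_mul_iff_left hb0 hbtop).mp hchain
    norm_num at h7
  -- termination
  have hcard : ∀ k, (Gs k).card + k ≤ F.card ∨ Gs k = ∅ := by
    intro k
    induction k with
    | zero =>
      left
      have h00 : Gs 0 = F := rfl
      rw [h00]
      omega
    | succ n ih =>
      rcases ih with h | h
      · rcases Finset.eq_empty_or_nonempty (Gs n) with he | hne
        · right; rw [hGstep, he]; simp [badF]
        · left
          have hne2 : badF μ E η lam (Gs n) ≠ Gs n := key _ (hGsubs n) hne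
          have hss : Gs (n + 1) ⊂ Gs n := by
            refine Finset.ssubset_iff_subset_ne.mpr ⟨hGmono n, ?_⟩
            rw [hGstep]; exact hne2
          have hlt := Finset.card_lt_card hss
          omega
      · right; rw [hGstep, h]; simp [badF]
  have hterm : Gs F.card = ∅ := by
    rcases hcard F.card with h | h
    · rcases Finset.eq_empty_or_nonempty (Gs F.card) with he | hne
      · exact he
      · exfalso; have := Finset.card_pos.mpr hne; omega
    · exact h
  -- good-set bound
  have hgood : ∀ k, ∀ i ∈ Gs k \ Gs (k + 1),
      μ (E i) ≤ (1 - η)⁻¹ * μ (E i \ BsetD E lam (Gs k)) := by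
    intro k i hi
    rw [Finset.mem_sdiff] at hi
    obtain ⟨hik, hik1⟩ := hi
    have hE0 : μ (E i) ≠ 0 := (hpos i (hGsubs k hik)).ne'
    have hEtop : μ (E i) ≠ ⊤ := (hfin i (hGsubs k hik)).ne
    have hnot : ¬ η < μ (BsetD E lam (Gs k) ∩ E i) / μ (E i) := by
      intro hc
      apply hik1
      rw [hGstep]
      simp only [badF, Finset.mem_filter]
      exact ⟨hik, hc⟩
    have h8 : μ (BsetD E lam (Gs k) ∩ E i) ≤ η * μ (E i) :=
      (ENNReal.div_le_iff_le_mul (Or.inl hE0) (Or.inl hEtop)).mp (not_lt.mp hnot)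
    have h9 : μ (E i ∩ BsetD E lam (Gs k)) + μ (E i \ BsetD E lam (Gs k)) = μ (E i) :=
      measure_inter_add_diff _ (hBkmeas k)
    have h10 : μ (E i) ≤ η * μ (E i) + μ (E i \ BsetD E lam (Gs k)) := by
      calc μ (E i) = μ (E i ∩ BsetD E lam (Gs k)) + μ (E i \ BsetD E lam (Gs k)) := h9.symm
        _ ≤ η * μ (E i) + μ (E i \ BsetD E lam (Gs k)) := by
            gcongr
            rw [Set.inter_comm]
            exact h8
    have h11 : (1 - η) * μ (E i) ≤ μ (E i \ BsetD E lam (Gs k)) := by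
      rw [ENNReal.sub_mul (fun _ _ => hEtop), one_mul]
      exact tsub_le_iff_right.mpr (by rwa [add_comm] at h10)
    have h12 : (1 - η) ≠ 0 := by
      simp only [ne_eq, tsub_eq_zero_iff_le]
      exact not_le.mpr hη1
    have h13 : (1 - η) ≠ ⊤ := (lt_of_le_of_lt tsub_le_self ENNReal.one_lt_top).ne
    calc μ (E i) = (1 - η)⁻¹ * ((1 - η) * μ (E i)) := by
          rw [← mul_assoc, ENNReal.inv_mul_cancel h12 h13, one_mul]
      _ ≤ (1 - η)⁻¹ * μ (E i \ BsetD E lam (Gs k)) := mul_le_mul_right h11 _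
  -- decomposition
  have hdec : ∀ m, ∑ i ∈ F, μ (E i) =
      (∑ k ∈ Finset.range m, ∑ i ∈ Gs k \ Gs (k + 1), μ (E i)) + ∑ i ∈ Gs m, μ (E i) := by
    intro m
    induction m with
    | zero => simp [hGs, GseqD]
    | succ n ih =>
      rw [Finset.sum_range_succ, ih, add_assoc]
      congr 1
      exact (Finset.sum_sdiff (hGmono n)).symm
  -- pointwise bound
  have hpoint : ∀ x,
      (∑ k ∈ Finset.range F.card, ∑ i ∈ Gs k \ Gs (k + 1),
        (E i \ BsetD E lam (Gs k)).indicator (1 : X → ℝ≥0∞) x) ≤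
      (⋃ i ∈ F, E i).indicator (fun _ => lam) x := by
    intro x
    by_cases hxU : x ∈ ⋃ i ∈ F, E i
    · rw [Set.indicator_of_mem hxU]
      have hQex : ∃ k, (∑ j ∈ Gs k, (E j).indicator (1 : X → ℝ≥0∞) x) ≤ lam :=
        ⟨F.card, by rw [hterm]; simp⟩
      set k₀ := Nat.find hQex with hk₀
      have hQ0 : (∑ j ∈ Gs k₀, (E j).indicator (1 : X → ℝ≥0∞) x) ≤ lam := Nat.find_spec hQex
      have hk₀le : k₀ ≤ F.card := Nat.find_min' hQex (by rw [hterm]; simp)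
      have hnotQ : ∀ k < k₀, lam < ∑ j ∈ Gs k, (E j).indicator (1 : X → ℝ≥0∞) x :=
        fun k hk => not_le.mp (Nat.find_min hQex hk)
      have htel : ∀ b, k₀ ≤ b →
          (∑ k ∈ Finset.Ico k₀ b, ∑ i ∈ Gs k \ Gs (k + 1),
            (E i).indicator (1 : X → ℝ≥0∞) x) +
            ∑ i ∈ Gs b, (E i).indicator (1 : X → ℝ≥0∞) x =
          ∑ i ∈ Gs k₀, (E i).indicator (1 : X → ℝ≥0∞) x := by
        intro b hb
        induction b, hb using Nat.le_induction with
        | base => simp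
        | succ n hn ih =>
          rw [Finset.sum_Ico_succ_top hn, add_assoc, Finset.sum_sdiff (hGmono n), ih]
      calc (∑ k ∈ Finset.range F.card, ∑ i ∈ Gs k \ Gs (k + 1),
            (E i \ BsetD E lam (Gs k)).indicator (1 : X → ℝ≥0∞) x)
          = (∑ k ∈ Finset.Ico 0 k₀, ∑ i ∈ Gs k \ Gs (k + 1),
              (E i \ BsetD E lam (Gs k)).indicator (1 : X → ℝ≥0∞) x) +
            ∑ k ∈ Finset.Ico k₀ F.card, ∑ i ∈ Gs k \ Gs (k + 1),
              (E i \ BsetD E lam (Gs k)).indicator (1 : X → ℝ≥0∞) x := by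
            rw [Finset.range_eq_Ico,
              ← Finset.sum_Ico_consecutive _ (Nat.zero_le k₀) hk₀le]
        _ = 0 + ∑ k ∈ Finset.Ico k₀ F.card, ∑ i ∈ Gs k \ Gs (k + 1),
              (E i \ BsetD E lam (Gs k)).indicator (1 : X → ℝ≥0∞) x := by
            congr 1
            apply Finset.sum_eq_zero
            intro k hk
            rw [Finset.mem_Ico] at hk
            apply Finset.sum_eq_zero
            intro i _
            apply Set.indicator_of_notMem
            rintro ⟨_, hxB⟩
            exact hxB (hnotQ k hk.2)
        _ ≤ 0 + ∑ k ∈ Finset.Ico k₀ F.card, ∑ i ∈ Gs k \ Gs (k + 1),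
              (E i).indicator (1 : X → ℝ≥0∞) x := by
            gcongr with k hk i hi
            exact Set.diff_subset
        _ ≤ ∑ i ∈ Gs k₀, (E i).indicator (1 : X → ℝ≥0∞) x := by
            rw [zero_add]
            exact le_self_add.trans_eq (htel F.card hk₀le)
        _ ≤ lam := hQ0
    · rw [Set.indicator_of_notMem hxU]
      have hz : ∀ k ∈ Finset.range F.card,
          (∑ i ∈ Gs k \ Gs (k + 1),
            (E i \ BsetD E lam (Gs k)).indicator (1 : X → ℝ≥0∞) x) = 0 := by
        intro k _
        apply Finset.sum_eq_zero
        intro i hi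
        apply Set.indicator_of_notMem
        intro hxi
        exact hxU (Set.mem_iUnion₂.mpr ⟨i, hGsubF k (Finset.mem_sdiff.mp hi).1, hxi.1⟩)
      rw [Finset.sum_congr rfl hz]
      simp
  -- integral bound
  have hUmeas : MeasurableSet (⋃ i ∈ F, E i) :=
    F.measurableSet_biUnion fun i hi => hmeas i (hF hi)
  have hint : (∑ k ∈ Finset.range F.card, ∑ i ∈ Gs k \ Gs (k + 1),
      μ (E i \ BsetD E lam (Gs k))) ≤ lam * μ (⋃ i ∈ F, E i) := by
    have hmeasd : ∀ k, ∀ i ∈ Gs k \ Gs (k + 1),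
        MeasurableSet (E i \ BsetD E lam (Gs k)) := fun k i hi =>
      (hmeas i (hGsubs k (Finset.mem_sdiff.mp hi).1)).diff (hBkmeas k)
    calc (∑ k ∈ Finset.range F.card, ∑ i ∈ Gs k \ Gs (k + 1),
          μ (E i \ BsetD E lam (Gs k)))
        = ∑ k ∈ Finset.range F.card, ∑ i ∈ Gs k \ Gs (k + 1),
            ∫⁻ x, (E i \ BsetD E lam (Gs k)).indicator (1 : X → ℝ≥0∞) x ∂μ := by
          refine Finset.sum_congr rfl fun k _ => Finset.sum_congr rfl fun i hi => ?_
          rw [lintegral_indicator_one (hmeasd k i hi)]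
      _ = ∫⁻ x, ∑ k ∈ Finset.range F.card, ∑ i ∈ Gs k \ Gs (k + 1),
            (E i \ BsetD E lam (Gs k)).indicator (1 : X → ℝ≥0∞) x ∂μ := by
          rw [lintegral_finset_sum _ (fun k _ => Finset.measurable_sum _
            (fun i hi => measurable_one.indicator (hmeasd k i hi)))]
          refine Finset.sum_congr rfl fun k _ => ?_
          rw [lintegral_finset_sum _
            (fun i hi => measurable_one.indicator (hmeasd k i hi))]
      _ ≤ ∫⁻ x, (⋃ i ∈ F, E i).indicator (fun _ => lam) x ∂μ := lintegral_mono hpoint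
      _ = lam * μ (⋃ i ∈ F, E i) := lintegral_indicator_const hUmeas lam
  -- assemble
  calc ∑ i ∈ F, μ (E i)
      = (∑ k ∈ Finset.range F.card, ∑ i ∈ Gs k \ Gs (k + 1), μ (E i)) +
        ∑ i ∈ Gs F.card, μ (E i) := hdec F.card
    _ = ∑ k ∈ Finset.range F.card, ∑ i ∈ Gs k \ Gs (k + 1), μ (E i) := by
        rw [hterm]; simp
    _ ≤ ∑ k ∈ Finset.range F.card, ∑ i ∈ Gs k \ Gs (k + 1),
          (1 - η)⁻¹ * μ (E i \ BsetD E lam (Gs k)) :=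
        Finset.sum_le_sum fun k _ => Finset.sum_le_sum fun i hi => hgood k i hi
    _ = (1 - η)⁻¹ * ∑ k ∈ Finset.range F.card, ∑ i ∈ Gs k \ Gs (k + 1),
          μ (E i \ BsetD E lam (Gs k)) := by
        rw [Finset.mul_sum]
        exact Finset.sum_congr rfl fun k _ => (Finset.mul_sum _ _ _).symm
    _ ≤ (1 - η)⁻¹ * (lam * μ (⋃ i ∈ F, E i)) := mul_le_mul_right hint _
    _ = 2 * (1 - η)⁻¹ * M * C₀ * μ (⋃ i ∈ F, E i) := by rw [hlam]; ring
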